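/- For all integers k ≥ 3 and l ≥ 1 with k − l ≠ 2 the following identity holds in F: Λch(k)·S̄ch(l) = R·y^{k−4}·(x₁x₂x₃)^{1−l}·a(l−1,l−1,0)/Π + R·y^{k−3}·(x₁x₂x₃)^{−l}·a(l,l,0)/Π. (This is the character form of the splitting Λ_k⊗S_l* ≅ Im d_{k−1,l−1} ⊕ Im d_{k,l} coming from exactness of the Koszul complex for the (3|1)-dimensional super vector space.) -/

import Mathlib

noncomputable section

/-- The field of rational functions over ℚ in four variables. -/
abbrev F : Type := FractionRing (MvPolynomial (Fin 4) ℚ)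

def x1 : F := algebraMap (MvPolynomial (Fin 4) ℚ) F (MvPolynomial.X 0)
def x2 : F := algebraMap (MvPolynomial (Fin 4) ℚ) F (MvPolynomial.X 1)
def x3 : F := algebraMap (MvPolynomial (Fin 4) ℚ) F (MvPolynomial.X 2)
def y  : F := algebraMap (MvPolynomial (Fin 4) ℚ) F (MvPolynomial.X 3)

/-- `R = (x₁+y)(x₂+y)(x₃+y)`. -/
def R : F := (x1 + y) * (x2 + y) * (x3 + y)

/-- `Π = (x₁−x₂)(x₂−x₃)(x₁−x₃)`. -/
def P : F := (x1 - x2) * (x2 - x3) * (x1 - x3)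

/-- `a(t,u,v)` : determinant of the 3×3 matrix with `i`-th row `(xᵢ^{t+2}, xᵢ^{u+1}, xᵢ^v)`. -/
def a (t u v : ℤ) : F :=
  Matrix.det !![x1 ^ (t+2), x1 ^ (u+1), x1 ^ v;
                x2 ^ (t+2), x2 ^ (u+1), x2 ^ v;
                x3 ^ (t+2), x3 ^ (u+1), x3 ^ v]

/-- Complete homogeneous symmetric polynomial of degree `k` in three variables
(`0` for `k < 0`). -/
def hc (u v w : F) (k : ℤ) : F :=
  if k < 0 then 0
  else ∑ i ∈ Finset.range (k.toNat + 1), ∑ j ∈ Finset.range (k.toNat - i + 1),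
    u ^ i * v ^ j * w ^ (k.toNat - i - j)

def h (k : ℤ) : F := hc x1 x2 x3 k

def hbar (k : ℤ) : F := hc x1⁻¹ x2⁻¹ x3⁻¹ k

/-- Elementary symmetric polynomials in `x₁, x₂, x₃`. -/
def e : ℕ → F
  | 0 => 1
  | 1 => x1 + x2 + x3
  | 2 => x1*x2 + x1*x3 + x2*x3
  | 3 => x1*x2*x3
  | _ => 0

/-- Character of the `j`-th super exterior power `Λ_j`. -/
def lamCh (j : ℕ) : F := ∑ r ∈ Finset.range (min 3 j + 1), e r * y ^ (j - r)

/-- Character of the dual `S_j*` of the `j`-th super symmetric power. -/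
def sBarCh (j : ℕ) : F := hbar j + y⁻¹ * hbar ((j : ℤ) - 1)

/-- Schur polynomial: `s_μ · Π = det (xᵢ^{μⱼ+3−j})`. -/
def schur (m1 m2 m3 : ℤ) : F := a m1 m2 m3 / P

lemma Xne (i : Fin 4) : algebraMap (MvPolynomial (Fin 4) ℚ) F (MvPolynomial.X i) ≠ 0 := by
  simp only [ne_eq, map_eq_zero_iff _ (IsFractionRing.injective _ _)]
  exact MvPolynomial.X_ne_zero i

lemma Xnee (i j : Fin 4) (hij : i ≠ j) :
    algebraMap (MvPolynomial (Fin 4) ℚ) F (MvPolynomial.X i)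
      ≠ algebraMap (MvPolynomial (Fin 4) ℚ) F (MvPolynomial.X j) := by
  intro h
  exact hij (MvPolynomial.X_injective (IsFractionRing.injective (MvPolynomial (Fin 4) ℚ) F h))

lemma hx1 : x1 ≠ 0 := Xne 0
lemma hx2 : x2 ≠ 0 := Xne 1
lemma hx3 : x3 ≠ 0 := Xne 2
lemma hy : y ≠ 0 := Xne 3
lemma hx12 : x1 ≠ x2 := Xnee 0 1 (by decide)
lemma hx13 : x1 ≠ x3 := Xnee 0 2 (by decide)
lemma hx23 : x2 ≠ x3 := Xnee 1 2 (by decide)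

lemma hP : P ≠ 0 := by
  unfold P
  exact mul_ne_zero (mul_ne_zero (sub_ne_zero.mpr hx12) (sub_ne_zero.mpr hx23))
    (sub_ne_zero.mpr hx13)

/-- geometric-type identity -/
lemma geom (u v : F) (n : ℕ) :
    (u - v) * ∑ j ∈ Finset.range (n+1), u^(n-j) * v^j = u^(n+1) - v^(n+1) := by
  induction n with
  | zero => simp
  | succ n ih =>
    rw [Finset.sum_range_succ]
    have hs : ∑ j ∈ Finset.range (n+1), u^(n+1-j) * v^j
        = u * ∑ j ∈ Finset.range (n+1), u^(n-j) * v^j := by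
      rw [Finset.mul_sum]
      refine Finset.sum_congr rfl fun j hj => ?_
      have hj' : j ≤ n := by simpa [Nat.lt_succ_iff] using hj
      rw [show n + 1 - j = (n - j) + 1 by omega, pow_succ]
      ring
    rw [hs]
    have h1 : n + 1 - (n + 1) = 0 := by omega
    rw [h1]
    linear_combination u * ih

lemma pw (u : F) (hu : u ≠ 0) (p q : ℕ) (hq : q ≤ p) : u^p * (u⁻¹)^q = u^(p-q) := by
  rw [pow_sub₀ u hu hq, inv_pow]

lemma det_expand (n : ℕ) :
    a (n:ℤ) (n:ℤ) 0
      = x1^(n+2)*x2^(n+1) - x1^(n+2)*x3^(n+1) - x1^(n+1)*x2^(n+2) + x1^(n+1)*x3^(n+2)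
        + x2^(n+2)*x3^(n+1) - x2^(n+1)*x3^(n+2) := by
  unfold a
  rw [Matrix.det_fin_three]
  simp only [Matrix.of_apply, Matrix.cons_val', Matrix.cons_val_zero, Matrix.cons_val_one,
    Matrix.head_cons, Matrix.empty_val', Matrix.cons_val_fin_one, Matrix.head_fin_const,
    Matrix.cons_val_two, Matrix.tail_cons, zpow_zero]
  rw [show (n:ℤ) + 2 = ((n+2 : ℕ) : ℤ) by push_cast; ring,
    show (n:ℤ) + 1 = ((n+1 : ℕ) : ℤ) by push_cast; ring,
    zpow_natCast, zpow_natCast, zpow_natCast, zpow_natCast, zpow_natCast, zpow_natCast]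
  ring

/-- key: `a(n,n,0) = (x₁x₂x₃)ⁿ · Π · h̄ₙ`. -/
lemma key (n : ℕ) : a (n:ℤ) (n:ℤ) 0 = (x1*x2*x3)^n * P * hbar (n:ℤ) := by
  -- T is (x1 x2 x3)^n * hbar n, written without inverses
  set T : F := ∑ i ∈ Finset.range (n+1), ∑ j ∈ Finset.range (n-i+1),
      x1^(n-i) * x2^(n-j) * x3^(i+j) with hTdef
  have hbarT : (x1*x2*x3)^n * hbar (n:ℤ) = T := by
    unfold hbar hc
    rw [if_neg (by omega : ¬ (n:ℤ) < 0)]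
    simp only [Int.toNat_natCast]
    rw [Finset.mul_sum, hTdef]
    refine Finset.sum_congr rfl fun i hi => ?_
    rw [Finset.mul_sum]
    refine Finset.sum_congr rfl fun j hj => ?_
    have hi' : i ≤ n := by simpa [Nat.lt_succ_iff] using hi
    have hj' : j ≤ n - i := by simpa [Nat.lt_succ_iff] using hj
    have e1 : (x1*x2*x3)^n * (x1⁻¹^i * x2⁻¹^j * x3⁻¹^(n-i-j))
        = (x1^n * x1⁻¹^i) * ((x2^n * x2⁻¹^j) * (x3^n * x3⁻¹^(n-i-j))) := by
      rw [mul_pow, mul_pow]; ring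
    rw [e1, pw x1 hx1 n i hi', pw x2 hx2 n j (by omega), pw x3 hx3 n (n-i-j) (by omega),
      show n - (n-i-j) = i + j by omega]
    ring
  -- inner geometric step
  have hT : (x2 - x3) * T = x2^(n+1) * (∑ i ∈ Finset.range (n+1), x1^(n-i) * x3^i)
      - x3^(n+1) * (∑ i ∈ Finset.range (n+1), x1^(n-i) * x2^i) := by
    rw [hTdef, Finset.mul_sum]
    rw [Finset.mul_sum, Finset.mul_sum, ← Finset.sum_sub_distrib]
    refine Finset.sum_congr rfl fun i hi => ?_
    have hi' : i ≤ n := by simpa [Nat.lt_succ_iff] using hi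
    have hinner : ∑ j ∈ Finset.range (n-i+1), x1^(n-i) * x2^(n-j) * x3^(i+j)
        = (x1^(n-i) * x2^i * x3^i) * ∑ j ∈ Finset.range ((n-i)+1), x2^((n-i)-j) * x3^j := by
      rw [Finset.mul_sum]
      refine Finset.sum_congr rfl fun j hj => ?_
      have hj' : j ≤ n - i := by simpa [Nat.lt_succ_iff] using hj
      rw [show n - j = i + ((n-i)-j) by omega, show i + j = i + j from rfl, pow_add, pow_add]
      ring
    rw [hinner]
    have hg := geom x2 x3 (n-i)
    have e2 : x2^i * x2^((n-i)+1) = x2^(n+1) := by rw [← pow_add]; congr 1; omega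
    have e3 : x3^i * x3^((n-i)+1) = x3^(n+1) := by rw [← pow_add]; congr 1; omega
    calc (x2 - x3) * ((x1^(n-i) * x2^i * x3^i) * ∑ j ∈ Finset.range ((n-i)+1), x2^((n-i)-j) * x3^j)
        = (x1^(n-i) * x2^i * x3^i) * ((x2 - x3) * ∑ j ∈ Finset.range ((n-i)+1), x2^((n-i)-j) * x3^j) := by ring
      _ = (x1^(n-i) * x2^i * x3^i) * (x2^((n-i)+1) - x3^((n-i)+1)) := by rw [hg]
      _ = x2^(n+1) * (x1^(n-i) * x3^i) - x3^(n+1) * (x1^(n-i) * x2^i) := by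
          linear_combination (x1^(n-i) * x3^i) * e2 - (x1^(n-i) * x2^i) * e3
  have g12 := geom x1 x2 n
  have g13 := geom x1 x3 n
  -- P * T equals the determinant
  have hPT : a (n:ℤ) (n:ℤ) 0 = P * T := by
    rw [det_expand n]
    unfold P
    have key2 : (x1-x2)*(x2-x3)*(x1-x3) * T
        = (x1-x2)*(x1-x3)*((x2-x3)*T) := by ring
    rw [key2, hT]
    linear_combination (-(x1-x2)*x2^(n+1)) * g13 + ((x1-x3)*x3^(n+1)) * g12
  rw [hPT, ← hbarT]
  ring

lemma lamCh_eq (m : ℕ) : lamCh (m+3) = y^m * R := by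
  unfold lamCh
  rw [show min 3 (m+3) = 3 by omega]
  rw [Finset.sum_range_succ, Finset.sum_range_succ, Finset.sum_range_succ, Finset.sum_range_succ,
    Finset.sum_range_zero]
  rw [show m+3-0 = m+3 from rfl, show m+3-1 = m+2 by omega, show m+3-2 = m+1 by omega,
    show m+3-3 = m by omega]
  simp only [R, e]
  rw [show m+3 = m+3 from rfl, pow_add, show m+2 = m+2 from rfl, pow_add,
    show m+1 = m+1 from rfl, pow_add]
  ring

/-- Character form of the splitting `Λ_k⊗S_l* ≅ Im d_{k−1,l−1} ⊕ Im d_{k,l}`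
(`k ≥ 3`, `l ≥ 1`, `k−l ≠ 2`). -/
theorem stmt_11 (k l : ℕ) (hk : 3 ≤ k) (hl : 1 ≤ l) (hkl : (k : ℤ) - l ≠ 2) :
    lamCh k * sBarCh l
    = R * y ^ ((k : ℤ) - 4) * (x1*x2*x3) ^ (1 - (l : ℤ)) * a ((l : ℤ) - 1) ((l : ℤ) - 1) 0 / P
      + R * y ^ ((k : ℤ) - 3) * (x1*x2*x3) ^ (-(l : ℤ)) * a l l 0 / P := by
  obtain ⟨m, rfl⟩ : ∃ m, k = m + 3 := ⟨k - 3, by omega⟩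
  obtain ⟨n, rfl⟩ : ∃ n, l = n + 1 := ⟨l - 1, by omega⟩
  have he3 : x1*x2*x3 ≠ 0 := mul_ne_zero (mul_ne_zero hx1 hx2) hx3
  have h1 := hx1; have h2 := hx2; have h3 := hx3; have h4 := hy; have h5 := hP
  rw [lamCh_eq]
  have E1 : y ^ (((m+3:ℕ):ℤ) - 4) = y^m * y⁻¹ := by
    rw [show (((m+3:ℕ):ℤ) - 4) = (m:ℤ) - 1 by push_cast; ring, zpow_sub₀ hy, zpow_natCast,
      zpow_one, div_eq_mul_inv]
  have E2 : y ^ (((m+3:ℕ):ℤ) - 3) = y^m := by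
    rw [show (((m+3:ℕ):ℤ) - 3) = (m:ℤ) by push_cast; ring, zpow_natCast]
  have E3 : (x1*x2*x3) ^ (1 - ((n+1:ℕ):ℤ)) = ((x1*x2*x3)^n)⁻¹ := by
    rw [show (1 - ((n+1:ℕ):ℤ)) = -(n:ℤ) by push_cast; ring, zpow_neg, zpow_natCast]
  have E4 : (x1*x2*x3) ^ (-((n+1:ℕ):ℤ)) = ((x1*x2*x3)^(n+1))⁻¹ := by
    rw [zpow_neg, zpow_natCast]
  have K2 : a (((n+1:ℕ):ℤ)-1) (((n+1:ℕ):ℤ)-1) 0 = (x1*x2*x3)^n * P * hbar (n:ℤ) := by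
    rw [show (((n+1:ℕ):ℤ)-1) = (n:ℤ) by push_cast; ring]; exact key n
  have K3 : a ((n+1:ℕ):ℤ) ((n+1:ℕ):ℤ) 0 = (x1*x2*x3)^(n+1) * P * hbar ((n+1:ℕ):ℤ) :=
    key (n+1)
  rw [E1, E2, E3, E4, K2, K3]
  unfold sBarCh
  rw [show (((n+1:ℕ):ℤ) - 1) = (n:ℤ) by push_cast; ring]
  have hpn : (x1*x2*x3)^n ≠ 0 := pow_ne_zero _ he3
  have hpn1 : (x1*x2*x3)^(n+1) ≠ 0 := pow_ne_zero _ he3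
  field_simp
  ring
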